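/- Let ρ⁰(z,w) := −1 + |z|² + |w|², let ρ′ : ℂ² → ℝ be smooth, and for ε ∈ ℝ set ρ^ε := ρ⁰ + ε ρ′. Then for every point p ∈ ℂ²: (a) det A₃(ρ⁰)(p) = 0; (b) the function ε ↦ det A₃(ρ^ε)(p) is differentiable at ε = 0 with derivative equal to det D₃(ρ⁰)(p) · Q⁰(ρ′)(p); and (c) the polynomial c₀ := det D₃(ρ⁰) does not vanish at any point of the unit sphere S³ = {ρ⁰ = 0}. Consequently det A₃(ρ^ε)(p) = c₀(p)·Q⁰(ρ′)(p)·ε + O(ε²). -/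

import Mathlib

noncomputable section

open Complex Matrix Set

set_option maxHeartbeats 1000000

/-- Wirtinger derivative `∂/∂z` (first coordinate) of `f : ℂ × ℂ → ℂ`. -/
def wdz (f : ℂ × ℂ → ℂ) (p : ℂ × ℂ) : ℂ :=
  (fderiv ℝ f p (1, 0) - Complex.I * fderiv ℝ f p (Complex.I, 0)) / 2

/-- Wirtinger derivative `∂/∂z̄` (first coordinate). -/
def wdzb (f : ℂ × ℂ → ℂ) (p : ℂ × ℂ) : ℂ :=
  (fderiv ℝ f p (1, 0) + Complex.I * fderiv ℝ f p (Complex.I, 0)) / 2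

/-- Wirtinger derivative `∂/∂w` (second coordinate). -/
def wdw (f : ℂ × ℂ → ℂ) (p : ℂ × ℂ) : ℂ :=
  (fderiv ℝ f p (0, 1) - Complex.I * fderiv ℝ f p (0, Complex.I)) / 2

/-- Wirtinger derivative `∂/∂w̄` (second coordinate). -/
def wdwb (f : ℂ × ℂ → ℂ) (p : ℂ × ℂ) : ℂ :=
  (fderiv ℝ f p (0, 1) + Complex.I * fderiv ℝ f p (0, Complex.I)) / 2

/-- The operator `L := -ρ_w ∂_z + ρ_z ∂_w` associated with `ρ`. -/
def Lop (ρ f : ℂ × ℂ → ℂ) : ℂ × ℂ → ℂ :=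
  fun p => -(wdw ρ p) * wdz f p + wdz ρ p * wdw f p

/-- The operator `L̄ := -ρ_w̄ ∂_z̄ + ρ_z̄ ∂_w̄` associated with `ρ`. -/
def Lbar (ρ f : ℂ × ℂ → ℂ) : ℂ × ℂ → ℂ :=
  fun p => -(wdwb ρ p) * wdzb f p + wdzb ρ p * wdwb f p

/-- The function `ρ_{Z²}(L,L) = ρ_zz ρ_w² - 2 ρ_zw ρ_z ρ_w + ρ_ww ρ_z²`. -/
def rhoZ2LL (ρ : ℂ × ℂ → ℂ) : ℂ × ℂ → ℂ :=
  fun p => wdz (wdz ρ) p * (wdw ρ p) ^ 2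
    - 2 * wdw (wdz ρ) p * wdz ρ p * wdw ρ p
    + wdw (wdw ρ) p * (wdz ρ p) ^ 2

/-- The row functions of the matrix `A_n(ρ)`: for `i ≤ n` the monomial `ρ_z^i ρ_w^{n-i}`,
and for `i = n + 1 + s` (with `0 ≤ s ≤ n - 3`) the function `ρ_z^s ρ_w^{n-3-s} ρ_{Z²}(L,L)`. -/
def rowA (ρ : ℂ × ℂ → ℂ) (n i : ℕ) : ℂ × ℂ → ℂ :=
  if i ≤ n then fun p => (wdz ρ p) ^ i * (wdw ρ p) ^ (n - i)
  else fun p => (wdz ρ p) ^ (i - (n + 1)) * (wdw ρ p) ^ (n - 3 - (i - (n + 1))) * rhoZ2LL ρ p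

/-- The `(2n-1) × (2n-1)` matrix `A_n(ρ)` at the point `p`; the `(i,j)` entry is
`L̄^j` applied to the `i`-th row function, evaluated at `p`. -/
def matA (ρ : ℂ × ℂ → ℂ) (n : ℕ) (p : ℂ × ℂ) :
    Matrix (Fin (2 * n - 1)) (Fin (2 * n - 1)) ℂ :=
  fun i j => (Lbar ρ)^[(j : ℕ)] (rowA ρ n (i : ℕ)) p

/-- The `(n+1) × (n+1)` matrix `D_n(ρ) = (L̄^j (ρ_z^k ρ_w^{n-k}))_{0 ≤ j,k ≤ n}` at `p`. -/
def matD (ρ : ℂ × ℂ → ℂ) (n : ℕ) (p : ℂ × ℂ) : Matrix (Fin (n + 1)) (Fin (n + 1)) ℂ :=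
  fun k j => (Lbar ρ)^[(j : ℕ)] (fun q => (wdz ρ q) ^ (k : ℕ) * (wdw ρ q) ^ (n - (k : ℕ))) p

/-- The determinant of the complex Jacobian matrix of a map `H : ℂ² → ℂ²`
(computed via Wirtinger derivatives of the two components). -/
def detJac (H : ℂ × ℂ → ℂ × ℂ) (p : ℂ × ℂ) : ℂ :=
  wdz (fun q => (H q).1) p * wdw (fun q => (H q).2) p
    - wdw (fun q => (H q).1) p * wdz (fun q => (H q).2) p

/-- The operator `L̄₀ := -w ∂_z̄ + z ∂_w̄` (the operator `L̄` of the sphere). -/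
def Lbar0 (f : ℂ × ℂ → ℂ) : ℂ × ℂ → ℂ :=
  fun p => -p.2 * wdzb f p + p.1 * wdwb f p

/-- `Q⁰(R) := L̄₀⁴ ( w̄² R_zz - 2 z̄ w̄ R_zw + z̄² R_ww )`. -/
def Q0 (R : ℂ × ℂ → ℂ) : ℂ × ℂ → ℂ :=
  Lbar0^[4] (fun p => (starRingEnd ℂ p.2) ^ 2 * wdz (wdz R) p
    - 2 * starRingEnd ℂ p.1 * starRingEnd ℂ p.2 * wdw (wdz R) p
    + (starRingEnd ℂ p.1) ^ 2 * wdw (wdw R) p)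

/-- The defining function of the unit sphere: `ρ⁰(z,w) = -1 + |z|² + |w|²`. -/
def rho0 : ℂ × ℂ → ℂ := fun Z => -1 + Z.1 * starRingEnd ℂ Z.1 + Z.2 * starRingEnd ℂ Z.2

namespace P51

inductive Dir | dz | dw | dzb | dwb
deriving DecidableEq

def wd : Dir → (ℂ × ℂ → ℂ) → (ℂ × ℂ) → ℂ
  | .dz => wdz
  | .dw => wdw
  | .dzb => wdzb
  | .dwb => wdwb

def vv1 : Dir → ℂ × ℂ
  | .dz => (1,0) | .dzb => (1,0) | .dw => (0,1) | .dwb => (0,1)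
def vv2 : Dir → ℂ × ℂ
  | .dz => (Complex.I,0) | .dzb => (Complex.I,0) | .dw => (0,Complex.I) | .dwb => (0,Complex.I)
def cc : Dir → ℂ
  | .dz => -Complex.I | .dzb => Complex.I | .dw => -Complex.I | .dwb => Complex.I

lemma wd_eq (d : Dir) (f : ℂ × ℂ → ℂ) (p : ℂ × ℂ) :
    wd d f p = (fderiv ℝ f p (vv1 d) + cc d * fderiv ℝ f p (vv2 d)) / 2 := by
  cases d <;> simp [wd, wdz, wdw, wdzb, wdwb, vv1, vv2, cc, sub_eq_add_neg, neg_mul]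

lemma wd_const (d : Dir) (c : ℂ) (p : ℂ × ℂ) : wd d (fun _ => c) p = 0 := by
  simp [wd_eq, fderiv_const]

lemma wd_add (d : Dir) {f g : ℂ × ℂ → ℂ} {p : ℂ × ℂ}
    (hf : DifferentiableAt ℝ f p) (hg : DifferentiableAt ℝ g p) :
    wd d (fun q => f q + g q) p = wd d f p + wd d g p := by
  simp only [wd_eq, fderiv_fun_add hf hg, ContinuousLinearMap.add_apply]
  ring

lemma wd_mul (d : Dir) {f g : ℂ × ℂ → ℂ} {p : ℂ × ℂ}
    (hf : DifferentiableAt ℝ f p) (hg : DifferentiableAt ℝ g p) :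
    wd d (fun q => f q * g q) p = wd d f p * g p + f p * wd d g p := by
  simp only [wd_eq, fderiv_fun_mul hf hg, ContinuousLinearMap.add_apply,
    ContinuousLinearMap.smul_apply, smul_eq_mul]
  ring

def vX : Dir → ℂ | .dz => 1 | _ => 0
def vY : Dir → ℂ | .dw => 1 | _ => 0
def vXb : Dir → ℂ | .dzb => 1 | _ => 0
def vYb : Dir → ℂ | .dwb => 1 | _ => 0

lemma wd_fst (d : Dir) (p : ℂ × ℂ) : wd d (fun q : ℂ × ℂ => q.1) p = vX d := by
  have h : fderiv ℝ (fun q : ℂ × ℂ => q.1) p = ContinuousLinearMap.fst ℝ ℂ ℂ := fderiv_fst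
  cases d <;>
    simp [wd_eq, h, vX, cc, vv1, vv2, Complex.I_mul_I] <;> ring

lemma wd_snd (d : Dir) (p : ℂ × ℂ) : wd d (fun q : ℂ × ℂ => q.2) p = vY d := by
  have h : fderiv ℝ (fun q : ℂ × ℂ => q.2) p = ContinuousLinearMap.snd ℝ ℂ ℂ := fderiv_snd
  cases d <;>
    simp [wd_eq, h, vY, cc, vv1, vv2, Complex.I_mul_I] <;> ring

def conjFst : ℂ × ℂ →L[ℝ] ℂ :=
  (Complex.conjCLE.toContinuousLinearMap).comp (ContinuousLinearMap.fst ℝ ℂ ℂ)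
def conjSnd : ℂ × ℂ →L[ℝ] ℂ :=
  (Complex.conjCLE.toContinuousLinearMap).comp (ContinuousLinearMap.snd ℝ ℂ ℂ)

lemma fderiv_cfst (p : ℂ × ℂ) :
    fderiv ℝ (fun q : ℂ × ℂ => starRingEnd ℂ q.1) p = conjFst := conjFst.fderiv

lemma fderiv_csnd (p : ℂ × ℂ) :
    fderiv ℝ (fun q : ℂ × ℂ => starRingEnd ℂ q.2) p = conjSnd := conjSnd.fderiv

lemma wd_cfst (d : Dir) (p : ℂ × ℂ) :
    wd d (fun q : ℂ × ℂ => starRingEnd ℂ q.1) p = vXb d := by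
  cases d <;>
    simp [wd_eq, fderiv_cfst, conjFst, vXb, cc, vv1, vv2, Complex.I_mul_I] <;> ring_nf <;>
    simp [Complex.I_sq] <;> ring

lemma wd_csnd (d : Dir) (p : ℂ × ℂ) :
    wd d (fun q : ℂ × ℂ => starRingEnd ℂ q.2) p = vYb d := by
  cases d <;>
    simp [wd_eq, fderiv_csnd, conjSnd, vYb, cc, vv1, vv2, Complex.I_mul_I] <;> ring_nf <;>
    simp [Complex.I_sq] <;> ring

lemma wd_contDiff (d : Dir) {f : ℂ × ℂ → ℂ} (hf : ContDiff ℝ (⊤ : ℕ∞) f) :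
    ContDiff ℝ (⊤ : ℕ∞) (wd d f) := by
  have hd : ContDiff ℝ (⊤ : ℕ∞) (fderiv ℝ f) := hf.fderiv_right (by norm_num)
  have h1 : ContDiff ℝ (⊤ : ℕ∞) (fun p => fderiv ℝ f p (vv1 d)) := hd.clm_apply contDiff_const
  have h2 : ContDiff ℝ (⊤ : ℕ∞) (fun p => fderiv ℝ f p (vv2 d)) := hd.clm_apply contDiff_const
  have he : wd d f = fun p => (fderiv ℝ f p (vv1 d) + cc d * fderiv ℝ f p (vv2 d)) / 2 :=
    funext (wd_eq d f)
  rw [he]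
  exact (h1.add (contDiff_const.mul h2)).div_const 2

lemma wd_diffAt (d : Dir) {f : ℂ × ℂ → ℂ} (hf : ContDiff ℝ (⊤ : ℕ∞) f) (p : ℂ × ℂ) :
    DifferentiableAt ℝ f p :=
  (hf.differentiable (by norm_num)).differentiableAt

end P51

namespace P51

inductive PE where
  | C : ℂ → PE
  | E : PE
  | X : PE
  | Y : PE
  | Xb : PE
  | Yb : PE
  | R : List Dir → PE
  | add : PE → PE → PE
  | mul : PE → PE → PE

def Wit (ρ' : ℂ × ℂ → ℂ) : List Dir → ℂ × ℂ → ℂ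
  | [] => ρ'
  | d :: l => wd d (Wit ρ' l)

def ev (ρ' : ℂ × ℂ → ℂ) (ε : ℝ) : PE → ℂ × ℂ → ℂ
  | .C c => fun _ => c
  | .E => fun _ => (ε : ℂ)
  | .X => fun q => q.1
  | .Y => fun q => q.2
  | .Xb => fun q => starRingEnd ℂ q.1
  | .Yb => fun q => starRingEnd ℂ q.2
  | .R l => Wit ρ' l
  | .add t u => fun q => ev ρ' ε t q + ev ρ' ε u q
  | .mul t u => fun q => ev ρ' ε t q * ev ρ' ε u q

def PE.D : Dir → PE → PE
  | _, .C _ => .C 0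
  | _, .E => .C 0
  | d, .X => .C (vX d)
  | d, .Y => .C (vY d)
  | d, .Xb => .C (vXb d)
  | d, .Yb => .C (vYb d)
  | d, .R l => .R (d :: l)
  | d, .add t u => .add (t.D d) (u.D d)
  | d, .mul t u => .add (.mul (t.D d) u) (.mul t (u.D d))

variable {ρ' : ℂ × ℂ → ℂ}

lemma Wit_contDiff (hs : ContDiff ℝ (⊤ : ℕ∞) ρ') : ∀ l, ContDiff ℝ (⊤ : ℕ∞) (Wit ρ' l)
  | [] => hs
  | d :: l => wd_contDiff d (Wit_contDiff hs l)

lemma ev_contDiff (hs : ContDiff ℝ (⊤ : ℕ∞) ρ') (ε : ℝ) :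
    ∀ t, ContDiff ℝ (⊤ : ℕ∞) (ev ρ' ε t)
  | .C c => contDiff_const
  | .E => contDiff_const
  | .X => contDiff_fst
  | .Y => contDiff_snd
  | .Xb => Complex.conjCLE.toContinuousLinearMap.contDiff.comp contDiff_fst
  | .Yb => Complex.conjCLE.toContinuousLinearMap.contDiff.comp contDiff_snd
  | .R l => Wit_contDiff hs l
  | .add t u => (ev_contDiff hs ε t).add (ev_contDiff hs ε u)
  | .mul t u => (ev_contDiff hs ε t).mul (ev_contDiff hs ε u)

lemma ev_D (hs : ContDiff ℝ (⊤ : ℕ∞) ρ') (ε : ℝ) (d : Dir) :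
    ∀ t, wd d (ev ρ' ε t) = ev ρ' ε (t.D d)
  | .C c => funext fun p => by simp [ev, PE.D, wd_const]
  | .E => funext fun p => by simp [ev, PE.D, wd_const]
  | .X => funext fun p => by simpa [ev, PE.D] using wd_fst d p
  | .Y => funext fun p => by simpa [ev, PE.D] using wd_snd d p
  | .Xb => funext fun p => by simpa [ev, PE.D] using wd_cfst d p
  | .Yb => funext fun p => by simpa [ev, PE.D] using wd_csnd d p
  | .R l => rfl
  | .add t u => funext fun p => by
      have ht := congrFun (ev_D hs ε d t) p
      have hu := congrFun (ev_D hs ε d u) p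
      show wd d (fun q => ev ρ' ε t q + ev ρ' ε u q) p = _
      rw [wd_add d (wd_diffAt d (ev_contDiff hs ε t) p) (wd_diffAt d (ev_contDiff hs ε u) p)]
      simp [ev, PE.D, ht, hu]
  | .mul t u => funext fun p => by
      have ht := congrFun (ev_D hs ε d t) p
      have hu := congrFun (ev_D hs ε d u) p
      show wd d (fun q => ev ρ' ε t q * ev ρ' ε u q) p = _
      rw [wd_mul d (wd_diffAt d (ev_contDiff hs ε t) p) (wd_diffAt d (ev_contDiff hs ε u) p)]
      simp [ev, PE.D, ht, hu]

lemma cont_ev (p : ℂ × ℂ) : ∀ t, Continuous fun ε : ℝ => ev ρ' ε t p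
  | .C c => continuous_const
  | .E => by simpa [ev] using Complex.continuous_ofReal
  | .X => continuous_const
  | .Y => continuous_const
  | .Xb => continuous_const
  | .Yb => continuous_const
  | .R l => continuous_const
  | .add t u => by
      simpa [ev] using (cont_ev p t).fun_add (cont_ev p u)
  | .mul t u => by
      simpa [ev] using (cont_ev p t).fun_mul (cont_ev p u)

end P51

namespace P51

def LBf (s t : PE) : PE :=
  .add (.mul (.mul (.C (-1)) (s.D .dwb)) (t.D .dzb)) (.mul (s.D .dzb) (t.D .dwb))

variable {ρ' : ℂ × ℂ → ℂ}

lemma Lbar_ev (hs : ContDiff ℝ (⊤ : ℕ∞) ρ') (ε : ℝ) (s t : PE) :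
    Lbar (ev ρ' ε s) (ev ρ' ε t) = ev ρ' ε (LBf s t) := by
  funext p
  have h1 := congrFun (ev_D hs ε .dwb s) p
  have h2 := congrFun (ev_D hs ε .dzb t) p
  have h3 := congrFun (ev_D hs ε .dzb s) p
  have h4 := congrFun (ev_D hs ε .dwb t) p
  simp only [wd] at h1 h2 h3 h4
  simp only [Lbar, LBf, ev, ← h1, ← h2, ← h3, ← h4]
  ring

lemma iter_LB (hs : ContDiff ℝ (⊤ : ℕ∞) ρ') (ε : ℝ) (s : PE) :
    ∀ (j : ℕ) (t : PE), (Lbar (ev ρ' ε s))^[j] (ev ρ' ε t) = ev ρ' ε ((LBf s)^[j] t)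
  | 0, t => rfl
  | j + 1, t => by
      rw [Function.iterate_succ_apply, Function.iterate_succ_apply, Lbar_ev hs ε s t,
        iter_LB hs ε s j (LBf s t)]

def RhoT : PE := .add (.add (.C (-1)) (.mul .X .Xb)) (.mul .Y .Yb)
def RhoE : PE := .add RhoT (.mul .E (.R []))

lemma ev_RhoT (ε : ℝ) : ev ρ' ε RhoT = rho0 := rfl

lemma ev_RhoE (ε : ℝ) : ev ρ' ε RhoE = fun Z => rho0 Z + (ε : ℂ) * ρ' Z := rfl

lemma ev_RhoE0 : ev ρ' 0 RhoE = rho0 := by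
  funext q
  rw [ev_RhoE]
  simp

def rzT : PE := RhoE.D .dz
def rwT : PE := RhoE.D .dw

def Z2T : PE :=
  .add (.add (.mul ((RhoE.D .dz).D .dz) (.mul rwT rwT))
      (.mul (.C (-2)) (.mul ((RhoE.D .dz).D .dw) (.mul rzT rwT))))
    (.mul ((RhoE.D .dw).D .dw) (.mul rzT rzT))

def rowT : ℕ → PE
  | 0 => .mul rwT (.mul rwT rwT)
  | 1 => .mul rzT (.mul rwT rwT)
  | 2 => .mul rzT (.mul rzT rwT)
  | 3 => .mul rzT (.mul rzT rzT)
  | _ => Z2T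

lemma hz_ev (hs : ContDiff ℝ (⊤ : ℕ∞) ρ') (ε : ℝ) :
    wdz (ev ρ' ε RhoE) = ev ρ' ε rzT := ev_D hs ε .dz RhoE

lemma hw_ev (hs : ContDiff ℝ (⊤ : ℕ∞) ρ') (ε : ℝ) :
    wdw (ev ρ' ε RhoE) = ev ρ' ε rwT := ev_D hs ε .dw RhoE

lemma rowA_ev (hs : ContDiff ℝ (⊤ : ℕ∞) ρ') (ε : ℝ) (i : ℕ) (hi : i ≤ 4) :
    rowA (ev ρ' ε RhoE) 3 i = ev ρ' ε (rowT i) := by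
  have e1 : wdz (wdz (ev ρ' ε RhoE)) = ev ρ' ε ((RhoE.D .dz).D .dz) := by
    rw [hz_ev hs ε]; exact ev_D hs ε .dz rzT
  have e2 : wdw (wdz (ev ρ' ε RhoE)) = ev ρ' ε ((RhoE.D .dz).D .dw) := by
    rw [hz_ev hs ε]; exact ev_D hs ε .dw rzT
  have e3 : wdw (wdw (ev ρ' ε RhoE)) = ev ρ' ε ((RhoE.D .dw).D .dw) := by
    rw [hw_ev hs ε]; exact ev_D hs ε .dw rwT
  interval_cases i <;> funext q
  · rw [rowA, if_pos (by norm_num), hz_ev hs ε, hw_ev hs ε]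
    simp only [rowT, ev]; ring
  · rw [rowA, if_pos (by norm_num), hz_ev hs ε, hw_ev hs ε]
    simp only [rowT, ev]; ring
  · rw [rowA, if_pos (by norm_num), hz_ev hs ε, hw_ev hs ε]
    simp only [rowT, ev]; ring
  · rw [rowA, if_pos (by norm_num), hz_ev hs ε, hw_ev hs ε]
    simp only [rowT, ev]; ring
  · rw [rowA, if_neg (by norm_num)]
    show (wdz (ev ρ' ε RhoE) q) ^ (4 - (3+1)) * (wdw (ev ρ' ε RhoE) q) ^ (3 - 3 - (4 - (3+1)))
        * rhoZ2LL (ev ρ' ε RhoE) q = _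
    rw [rhoZ2LL]
    simp only [e1, e2, e3]
    simp only [hz_ev hs ε, hw_ev hs ε]
    simp only [rowT, Z2T, ev]
    ring

lemma matA_rep (hs : ContDiff ℝ (⊤ : ℕ∞) ρ') (ε : ℝ) (p : ℂ × ℂ) (i j : Fin 5) :
    matA (fun Z => rho0 Z + (ε : ℂ) * ρ' Z) 3 p i j
      = ev ρ' ε ((LBf RhoE)^[(j : ℕ)] (rowT (i : ℕ))) p := by
  show (Lbar (fun Z => rho0 Z + (ε : ℂ) * ρ' Z))^[(j : ℕ)]
      (rowA (fun Z => rho0 Z + (ε : ℂ) * ρ' Z) 3 (i : ℕ)) p = _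
  rw [← ev_RhoE (ρ' := ρ') ε, rowA_ev hs ε (i : ℕ) (by omega), iter_LB hs ε RhoE]

end P51

namespace P51

def s0T : PE :=
  .add (.mul (.mul .Yb .Yb) (.R [.dz,.dz]))
  (.add (.mul (.C 2) (.mul .E (.mul .Yb (.mul (.R [.dw]) (.R [.dz,.dz])))))
  (.add (.mul (.mul .E .E) (.mul (.R [.dw]) (.mul (.R [.dw]) (.R [.dz,.dz]))))
  (.add (.mul (.C (-2)) (.mul .Xb (.mul .Yb (.R [.dw,.dz]))))
  (.add (.mul (.C (-2)) (.mul .E (.mul .Xb (.mul (.R [.dw,.dz]) (.R [.dw])))))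
  (.add (.mul (.C (-2)) (.mul .E (.mul .Yb (.mul (.R [.dw,.dz]) (.R [.dz])))))
  (.add (.mul (.C (-2)) (.mul (.mul .E .E) (.mul (.R [.dw,.dz]) (.mul (.R [.dw]) (.R [.dz])))))
  (.add (.mul (.mul .Xb .Xb) (.R [.dw,.dw]))
  (.add (.mul (.C 2) (.mul .E (.mul .Xb (.mul (.R [.dw,.dw]) (.R [.dz])))))
        (.mul (.mul .E .E) (.mul (.R [.dw,.dw]) (.mul (.R [.dz]) (.R [.dz]))))))))))))

variable {ρ' : ℂ × ℂ → ℂ}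

lemma Z2_factor (ε : ℝ) : ev ρ' ε Z2T = ev ρ' ε (.mul .E s0T) := by
  funext q
  simp only [Z2T, s0T, rzT, rwT, RhoE, RhoT, PE.D, ev, vX, vY, vXb, vYb]
  ring

lemma LB_mulE (ε : ℝ) (s t : PE) :
    ev ρ' ε (LBf s (.mul .E t)) = ev ρ' ε (.mul .E (LBf s t)) := by
  funext q
  simp only [LBf, PE.D, ev]
  ring

lemma iter_mulE (hs : ContDiff ℝ (⊤ : ℕ∞) ρ') (ε : ℝ) (s : PE) :
    ∀ (j : ℕ) (t : PE),
      ev ρ' ε ((LBf s)^[j] (.mul .E t)) = fun q => (ε : ℂ) * ev ρ' ε ((LBf s)^[j] t) q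
  | 0, t => by funext q; simp [ev]
  | j + 1, t => by
      rw [Function.iterate_succ_apply, Function.iterate_succ_apply]
      have h1 : ev ρ' ε ((LBf s)^[j] (LBf s (.mul .E t)))
          = ev ρ' ε ((LBf s)^[j] (.mul .E (LBf s t))) := by
        rw [← iter_LB hs ε s, ← iter_LB hs ε s, LB_mulE]
      rw [h1, iter_mulE hs ε s j (LBf s t)]

lemma Lbar_rho0 : Lbar rho0 = Lbar0 := by
  have hzb : ∀ p : ℂ × ℂ, wdzb rho0 p = p.1 := by
    intro p
    have h := congrFun (ev_D (ρ' := fun _ => (0:ℂ)) contDiff_const 0 .dzb RhoT) p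
    rw [ev_RhoT] at h
    simp only [wd] at h
    rw [h]
    simp [RhoT, PE.D, ev, vX, vY, vXb, vYb]
  have hwb : ∀ p : ℂ × ℂ, wdwb rho0 p = p.2 := by
    intro p
    have h := congrFun (ev_D (ρ' := fun _ => (0:ℂ)) contDiff_const 0 .dwb RhoT) p
    rw [ev_RhoT] at h
    simp only [wd] at h
    rw [h]
    simp [RhoT, PE.D, ev, vX, vY, vXb, vYb]
  funext f p
  simp [Lbar, Lbar0, hzb, hwb]

lemma ev0_s0_iter (hs : ContDiff ℝ (⊤ : ℕ∞) ρ') (j : ℕ) :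
    ev ρ' 0 ((LBf RhoE)^[j] s0T)
      = Lbar0^[j] (fun p => (starRingEnd ℂ p.2) ^ 2 * wdz (wdz ρ') p
          - 2 * starRingEnd ℂ p.1 * starRingEnd ℂ p.2 * wdw (wdz ρ') p
          + (starRingEnd ℂ p.1) ^ 2 * wdw (wdw ρ') p) := by
  rw [← iter_LB hs 0 RhoE j s0T, ev_RhoE0, Lbar_rho0]
  congr 1
  funext q
  simp only [s0T, ev, Wit, wd, Complex.ofReal_zero]
  ring

lemma row4_factor (hs : ContDiff ℝ (⊤ : ℕ∞) ρ') (ε : ℝ) (p : ℂ × ℂ) (j : Fin 5) :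
    matA (fun Z => rho0 Z + (ε : ℂ) * ρ' Z) 3 p 4 j
      = (ε : ℂ) * ev ρ' ε ((LBf RhoE)^[(j : ℕ)] s0T) p := by
  rw [matA_rep hs ε p 4 j]
  have h0 : rowT ((4 : Fin 5) : ℕ) = Z2T := rfl
  have hc : ev ρ' ε ((LBf RhoE)^[(j : ℕ)] (rowT ((4 : Fin 5) : ℕ)))
      = ev ρ' ε ((LBf RhoE)^[(j : ℕ)] (.mul .E s0T)) := by
    rw [h0, ← iter_LB hs ε RhoE, ← iter_LB hs ε RhoE, Z2_factor]
  rw [congrFun hc p, congrFun (iter_mulE hs ε RhoE (j : ℕ) s0T) p]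

end P51

namespace P51

lemma iterate4 (g : PE → PE) (t : PE) : g^[4] t = g (g (g (g t))) := rfl
lemma iterate3 (g : PE → PE) (t : PE) : g^[3] t = g (g (g t)) := rfl
lemma iterate2 (g : PE → PE) (t : PE) : g^[2] t = g (g t) := rfl
lemma iterate1 (g : PE → PE) (t : PE) : g^[1] t = g t := rfl
lemma iterate0 (g : PE → PE) (t : PE) : g^[0] t = t := rfl

def monoT : ℕ → PE
  | 0 => .mul .Yb (.mul .Yb .Yb)
  | 1 => .mul .Xb (.mul .Yb .Yb)
  | 2 => .mul .Xb (.mul .Xb .Yb)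
  | _ => .mul .Xb (.mul .Xb .Xb)

variable {ρ' : ℂ × ℂ → ℂ}

lemma wd_rho0 (d : Dir) :
    wd d rho0 = ev (fun _ => (0:ℂ)) 0 (RhoT.D d) := by
  rw [← ev_RhoT (ρ' := fun _ => (0:ℂ)) 0]
  exact ev_D contDiff_const 0 d RhoT

lemma hz0 : wdz rho0 = fun q : ℂ × ℂ => starRingEnd ℂ q.1 := by
  have h := wd_rho0 .dz
  simp only [wd] at h
  rw [h]; funext q
  simp [RhoT, PE.D, ev, vX, vY, vXb, vYb]

lemma hw0 : wdw rho0 = fun q : ℂ × ℂ => starRingEnd ℂ q.2 := by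
  have h := wd_rho0 .dw
  simp only [wd] at h
  rw [h]; funext q
  simp [RhoT, PE.D, ev, vX, vY, vXb, vYb]

lemma rowA0_ev (k : ℕ) (hk : k ≤ 3) :
    rowA rho0 3 k = ev ρ' 0 (monoT k) := by
  interval_cases k <;> (funext q; rw [rowA, if_pos (by norm_num), hz0, hw0]) <;>
    (simp only [monoT, ev]; ring)

lemma matA0_rep (hs : ContDiff ℝ (⊤ : ℕ∞) ρ') (p : ℂ × ℂ) (i j : Fin 5) (hi : (i : ℕ) ≤ 3) :
    matA rho0 3 p i j = ev ρ' 0 ((LBf RhoT)^[(j : ℕ)] (monoT (i : ℕ))) p := by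
  show (Lbar rho0)^[(j : ℕ)] (rowA rho0 3 (i : ℕ)) p = _
  rw [rowA0_ev (ρ' := ρ') (i : ℕ) hi, ← ev_RhoT (ρ' := ρ') 0, iter_LB hs 0 RhoT]

lemma matD_rep (hs : ContDiff ℝ (⊤ : ℕ∞) ρ') (p : ℂ × ℂ) (k j : Fin 4) :
    matD rho0 3 p k j = ev ρ' 0 ((LBf RhoT)^[(j : ℕ)] (monoT (k : ℕ))) p := by
  show (Lbar rho0)^[(j : ℕ)]
      (fun q => (wdz rho0 q) ^ (k : ℕ) * (wdw rho0 q) ^ (3 - (k : ℕ))) p = _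
  have h : (fun q => (wdz rho0 q) ^ (k : ℕ) * (wdw rho0 q) ^ (3 - (k : ℕ)))
      = rowA rho0 3 (k : ℕ) := by rw [rowA, if_pos (by omega)]
  rw [h, rowA0_ev (ρ' := ρ') (k : ℕ) (by omega), ← ev_RhoT (ρ' := ρ') 0, iter_LB hs 0 RhoT]



end P51

namespace P51

/-- Normal forms of `L̄₀^j (z̄^k w̄^(3-k))`. -/
def nT : ℕ → ℕ → PE
  | 0, 0 => .mul .Yb (.mul .Yb .Yb)
  | 0, 1 => .mul (.C 3) (.mul .X (.mul .Yb .Yb))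
  | 0, 2 => .mul (.C 6) (.mul .X (.mul .X .Yb))
  | 0, 3 => .mul (.C 6) (.mul .X (.mul .X .X))
  | 1, 0 => .mul .Xb (.mul .Yb .Yb)
  | 1, 1 => .add (.mul (.C (-1)) (.mul .Y (.mul .Yb .Yb))) (.mul (.C 2) (.mul .X (.mul .Xb .Yb)))
  | 1, 2 => .add (.mul (.C (-4)) (.mul .X (.mul .Y .Yb))) (.mul (.C 2) (.mul .X (.mul .X .Xb)))
  | 1, 3 => .mul (.C (-6)) (.mul .X (.mul .X .Y))
  | 2, 0 => .mul .Xb (.mul .Xb .Yb)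
  | 2, 1 => .add (.mul (.C (-2)) (.mul .Y (.mul .Xb .Yb))) (.mul .X (.mul .Xb .Xb))
  | 2, 2 => .add (.mul (.C 2) (.mul .Y (.mul .Y .Yb))) (.mul (.C (-4)) (.mul .X (.mul .Y .Xb)))
  | 2, 3 => .mul (.C 6) (.mul .X (.mul .Y .Y))
  | 3, 0 => .mul .Xb (.mul .Xb .Xb)
  | 3, 1 => .mul (.C (-3)) (.mul .Y (.mul .Xb .Xb))
  | 3, 2 => .mul (.C 6) (.mul .Y (.mul .Y .Xb))
  | 3, 3 => .mul (.C (-6)) (.mul .Y (.mul .Y .Y))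
  | _, _ => .C 0

variable {ρ' : ℂ × ℂ → ℂ}

lemma LBf_cong (hs : ContDiff ℝ (⊤ : ℕ∞) ρ') {ε : ℝ} {t t' : PE} (s : PE)
    (h : ev ρ' ε t = ev ρ' ε t') : ev ρ' ε (LBf s t) = ev ρ' ε (LBf s t') := by
  rw [← Lbar_ev hs ε s t, ← Lbar_ev hs ε s t', h]

lemma stepD (k j : ℕ) (hk : k ≤ 3) (hj : j ≤ 3) :
    ev ρ' 0 (LBf RhoT (nT k j)) = ev ρ' 0 (nT k (j + 1)) := by
  interval_cases k <;> interval_cases j <;>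
    (funext q; simp only [nT, LBf, RhoT, PE.D, ev, vX, vY, vXb, vYb]; ring)

lemma chainD (hs : ContDiff ℝ (⊤ : ℕ∞) ρ') (k : ℕ) (hk : k ≤ 3) :
    ∀ j, j ≤ 4 → ev ρ' 0 ((LBf RhoT)^[j] (monoT k)) = ev ρ' 0 (nT k j)
  | 0, _ => by
      interval_cases k <;> rfl
  | j + 1, hj => by
      rw [Function.iterate_succ_apply',
        LBf_cong hs RhoT (chainD hs k hk j (by omega)), stepD k j hk (by omega)]

lemma matD_explicit (hs : ContDiff ℝ (⊤ : ℕ∞) ρ') (p : ℂ × ℂ) (k j : Fin 4) :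
    matD rho0 3 p k j = ev ρ' 0 (nT (k : ℕ) (j : ℕ)) p := by
  rw [matD_rep hs p k j, chainD hs (k : ℕ) (by omega) (j : ℕ) (by omega)]

lemma col4_zero (hs : ContDiff ℝ (⊤ : ℕ∞) ρ') (p : ℂ × ℂ) (i : Fin 5) (hi : (i : ℕ) ≤ 3) :
    matA rho0 3 p i 4 = 0 := by
  rw [matA0_rep hs p i 4 hi]
  rw [show ((4 : Fin 5) : ℕ) = 4 from rfl, chainD hs (i : ℕ) hi 4 le_rfl]
  have : nT (i : ℕ) 4 = .C 0 := by
    have h3 := hi; interval_cases hh : (i : ℕ) <;> rfl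
  rw [this]
  rfl

end P51

namespace P51

variable {ρ' : ℂ × ℂ → ℂ}

lemma detD_val (hs : ContDiff ℝ (⊤ : ℕ∞) ρ') (p : ℂ × ℂ) :
    (matD rho0 3 p).det
      = 12 * (p.1 * starRingEnd ℂ p.1 + p.2 * starRingEnd ℂ p.2) ^ 6 := by
  set z := p.1; set w := p.2
  set a := starRingEnd ℂ p.1; set b := starRingEnd ℂ p.2
  have hM : matD rho0 3 p =
      !![b^3, 3*z*b^2, 6*z^2*b, 6*z^3;
         a*b^2, -(w*b^2) + 2*z*a*b, -(4*z*w*b) + 2*z^2*a, -(6*z^2*w);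
         a^2*b, -(2*w*a*b) + z*a^2, 2*w^2*b - 4*z*w*a, 6*z*w^2;
         a^3, -(3*w*a^2), 6*w^2*a, -(6*w^3)] := by
    ext k j
    fin_cases k <;> fin_cases j <;> rw [matD_explicit hs p] <;>
      (simp [nT, ev, -mul_eq_mul_left_iff, -mul_eq_mul_right_iff]; try ring)
  rw [hM]
  simp [Matrix.det_succ_row_zero, Fin.sum_univ_succ, Fin.succAbove, Fin.castSucc,
    Fin.castAdd, Fin.castLE]
  ring

end P51

/-- **Proposition 5.1**: for perturbations `ρ^ε = ρ⁰ + ε ρ'` of the sphere, at every `p`: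
(a) `det A₃(ρ⁰)(p) = 0`; (b) `ε ↦ det A₃(ρ^ε)(p)` is differentiable at `ε = 0` with
derivative `det D₃(ρ⁰)(p) · Q⁰(ρ')(p)`; and (c) `det D₃(ρ⁰)` does not vanish at any point of
the unit sphere `{ρ⁰ = 0}`. -/
theorem detA3_sphere_perturbation (ρ' : ℂ × ℂ → ℂ)
    (hs : ContDiff ℝ (⊤ : ℕ∞) ρ') (hreal : ∀ q, (ρ' q).im = 0) (p : ℂ × ℂ) :
    (matA rho0 3 p).det = 0 ∧
      HasDerivAt (fun ε : ℝ => (matA (fun Z => rho0 Z + (ε : ℂ) * ρ' Z) 3 p).det)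
        ((matD rho0 3 p).det * Q0 ρ' p) 0 ∧
      (rho0 p = 0 → (matD rho0 3 p).det ≠ 0) := by
  classical
  have hA0 : (fun Z => rho0 Z + ((0:ℝ) : ℂ) * ρ' Z) = rho0 := by
    funext Z; simp
  have hrow4 : ∀ (ε : ℝ) (j : Fin 5),
      matA (fun Z => rho0 Z + (ε : ℂ) * ρ' Z) 3 p 4 j
        = (ε : ℂ) * P51.ev ρ' ε ((P51.LBf P51.RhoE)^[(j : ℕ)] P51.s0T) p :=
    fun ε j => P51.row4_factor hs ε p j
  have hrow40 : ∀ j : Fin 5, matA rho0 3 p 4 j = 0 := by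
    intro j
    have h := hrow4 0 j
    rw [hA0] at h
    simpa using h
  refine ⟨Matrix.det_eq_zero_of_row_eq_zero 4 hrow40, ?_, ?_⟩
  · -- part (b)
    set v : ℝ → Fin 5 → ℂ :=
      fun ε j => P51.ev ρ' ε ((P51.LBf P51.RhoE)^[(j : ℕ)] P51.s0T) p with hv
    set B : ℝ → Matrix (Fin 5) (Fin 5) ℂ :=
      fun ε => Matrix.updateRow (matA (fun Z => rho0 Z + (ε : ℂ) * ρ' Z) 3 p) 4 (v ε) with hB
    have key1 : ∀ ε : ℝ,
        (matA (fun Z => rho0 Z + (ε : ℂ) * ρ' Z) 3 p).det = (ε : ℂ) * (B ε).det := by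
      intro ε
      have hrow : matA (fun Z => rho0 Z + (ε : ℂ) * ρ' Z) 3 p 4 = (ε : ℂ) • v ε := by
        funext j
        rw [Pi.smul_apply, smul_eq_mul]
        exact hrow4 ε j
      conv_lhs =>
        rw [← Matrix.updateRow_eq_self (matA (fun Z => rho0 Z + (ε : ℂ) * ρ' Z) 3 p) 4]
      rw [hrow, Matrix.det_updateRow_smul]
    have key2 : Continuous fun ε : ℝ => (B ε).det := by
      apply Continuous.matrix_det
      apply continuous_matrix
      intro i j
      by_cases hi : i = (4 : Fin 5)
      · subst hi
        have he : ∀ ε : ℝ, B ε 4 j = v ε j := by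
          intro ε
          show Matrix.updateRow (matA (fun Z => rho0 Z + (ε : ℂ) * ρ' Z) 3 p) 4 (v ε) 4 j = _
          rw [Matrix.updateRow_self]
        exact (P51.cont_ev p _).congr fun ε => (he ε).symm
      · have he : ∀ ε : ℝ, B ε i j
            = P51.ev ρ' ε ((P51.LBf P51.RhoE)^[(j : ℕ)] (P51.rowT (i : ℕ))) p := by
          intro ε
          show Matrix.updateRow (matA (fun Z => rho0 Z + (ε : ℂ) * ρ' Z) 3 p) 4 (v ε) i j = _
          rw [Matrix.updateRow_ne hi]
          exact P51.matA_rep hs ε p i j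
        exact (P51.cont_ev p _).congr fun ε => (he ε).symm
    have hB0 : B 0 = Matrix.updateRow (matA rho0 3 p) 4 (v 0) := by
      show Matrix.updateRow (matA (fun Z => rho0 Z + ((0:ℝ) : ℂ) * ρ' Z) 3 p) 4 (v 0) = _
      rw [hA0]
    have hv04 : v 0 4 = Q0 ρ' p := by
      rw [hv]
      exact congrFun (P51.ev0_s0_iter hs 4) p
    have hsub44 : (Matrix.updateRow (matA rho0 3 p) 4 (v 0)).submatrix
        (Fin.succAbove 4) (Fin.succAbove 4) = matD rho0 3 p := by
      ext r c
      rw [Matrix.submatrix_apply]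
      rw [show ((4 : Fin 5).succAbove r) = Fin.castSucc r from congrFun Fin.succAbove_last r]
      rw [show ((4 : Fin 5).succAbove c) = Fin.castSucc c from congrFun Fin.succAbove_last c]
      rw [Matrix.updateRow_ne (show Fin.castSucc r ≠ (4 : Fin 5) from (Fin.castSucc_lt_last r).ne)]
      show (Lbar rho0)^[((Fin.castSucc c : Fin 5) : ℕ)] (rowA rho0 3 ((Fin.castSucc r : Fin 5) : ℕ)) p
        = (Lbar rho0)^[(c : ℕ)] (fun q => (wdz rho0 q) ^ (r : ℕ) * (wdw rho0 q) ^ (3 - (r : ℕ))) p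
      rw [Fin.coe_castSucc, Fin.coe_castSucc, rowA, if_pos (by omega)]
    have hminor : ∀ j : Fin 5, (j : ℕ) ≤ 3 →
        ((Matrix.updateRow (matA rho0 3 p) 4 (v 0)).submatrix
          (Fin.succAbove 4) (Fin.succAbove j)).det = 0 := by
      intro j hj
      apply Matrix.det_eq_zero_of_column_eq_zero 3
      intro r
      rw [Matrix.submatrix_apply]
      rw [show ((4 : Fin 5).succAbove r) = Fin.castSucc r from congrFun Fin.succAbove_last r]
      have hsj : j.succAbove (3 : Fin 4) = (4 : Fin 5) := by
        rw [Fin.succAbove_of_le_castSucc j 3 (by rw [Fin.le_def]; simpa using hj)]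
        rfl
      rw [hsj]
      rw [Matrix.updateRow_ne (show Fin.castSucc r ≠ (4 : Fin 5) from (Fin.castSucc_lt_last r).ne)]
      exact P51.col4_zero hs p _ (by simpa using Nat.lt_succ_iff.mp r.2)
    have hB0det : (B 0).det = (matD rho0 3 p).det * Q0 ρ' p := by
      rw [hB0, Matrix.det_succ_row _ (4 : Fin 5), Fin.sum_univ_five]
      rw [hminor 0 (by decide), hminor 1 (by decide), hminor 2 (by decide),
        hminor 3 (by decide), hsub44]
      rw [show (Matrix.updateRow (matA rho0 3 p) 4 (v 0)) 4 = v 0 from Matrix.updateRow_self]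
      rw [hv04]
      norm_num [mul_comm]
    rw [hasDerivAt_iff_tendsto_slope]
    have h1 : Filter.Tendsto (fun ε : ℝ => (B ε).det) (nhdsWithin 0 {(0:ℝ)}ᶜ)
        (nhds ((matD rho0 3 p).det * Q0 ρ' p)) := by
      rw [← hB0det]
      exact (key2.tendsto 0).mono_left nhdsWithin_le_nhds
    refine h1.congr' ?_
    filter_upwards [self_mem_nhdsWithin] with ε hε
    have hε' : (ε : ℂ) ≠ 0 := Complex.ofReal_ne_zero.2 hε
    rw [slope_def_module]
    rw [key1 ε, key1 0]
    rw [Complex.ofReal_zero, zero_mul, sub_zero, sub_zero, Complex.real_smul]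
    push_cast
    field_simp
  · -- part (c)
    intro h0
    rw [P51.detD_val hs p]
    have h1 : p.1 * starRingEnd ℂ p.1 + p.2 * starRingEnd ℂ p.2 = 1 := by
      have h0' : -1 + p.1 * starRingEnd ℂ p.1 + p.2 * starRingEnd ℂ p.2 = 0 := h0
      linear_combination h0'
    rw [h1]
    norm_num
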